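/- arXiv:1501.05248 — 6 statements merged into one kernel-verified Lean document; each statement's English description precedes it below -/
import Mathlib

section
/- Let h(r) = -r^{-12} + 2r^{-6} and t(r) = (360/121)(11/5)^{1/6} r^{-1} - 25/11 for r > 0. Then t(r) > h(r) for 0 < r < (11/5)^{1/6} and t(r) < h(r) for r > (11/5)^{1/6}. -/
theorem stmt_4 (h t : ℝ → ℝ)
    (hh : ∀ r : ℝ, 0 < r → h r = -r ^ (-12 : ℤ) + 2 * r ^ (-6 : ℤ))
    (ht : ∀ r : ℝ, 0 < r → t r = (360/121) * (11/5 : ℝ) ^ ((1:ℝ)/6) * r⁻¹ - 25/11) :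
    (∀ r : ℝ, 0 < r → r < (11/5 : ℝ) ^ ((1:ℝ)/6) → h r < t r) ∧
    (∀ r : ℝ, (11/5 : ℝ) ^ ((1:ℝ)/6) < r → t r < h r) := by
  set c : ℝ := (11/5 : ℝ) ^ ((1:ℝ)/6) with hcdef
  have hc : 0 < c := Real.rpow_pos_of_pos (by norm_num) _
  have hc6 : c ^ 6 = 11/5 := by
    rw [hcdef, ← Real.rpow_natCast ((11/5:ℝ) ^ ((1:ℝ)/6)) 6, ← Real.rpow_mul (by norm_num)]
    norm_num
  have key : ∀ r : ℝ, 0 < r → 121 * r ^ 12 * (t r - h r) =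
      (c - r) ^ 3 * (275*r^9 + 465*c*r^8 + 570*c^2*r^7 + 590*c^3*r^6 + 525*c^4*r^5
        + 375*c^5*r^4 + 550*r^3 + 330*c*r^2 + 165*c^2*r + 55*c^3) := by
    intro r hr
    rw [hh r hr, ht r hr]
    have h12 : r ^ (-12 : ℤ) = (r ^ 12)⁻¹ := by
      rw [zpow_neg]; norm_cast
    have h6 : r ^ (-6 : ℤ) = (r ^ 6)⁻¹ := by
      rw [zpow_neg]; norm_cast
    rw [h12, h6]
    field_simp
    ring_nf
    linear_combination (-605 - 4125*r^4*c^2 + 6600*r^5*c - 1540*r^6) * hc6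
  have Mpos : ∀ r : ℝ, 0 < r → 0 < 275*r^9 + 465*c*r^8 + 570*c^2*r^7 + 590*c^3*r^6
      + 525*c^4*r^5 + 375*c^5*r^4 + 550*r^3 + 330*c*r^2 + 165*c^2*r + 55*c^3 := by
    intro r hr
    have p1 := mul_pos hc (pow_pos hr 8)
    have p2 := mul_pos (pow_pos hc 2) (pow_pos hr 7)
    have p3 := mul_pos (pow_pos hc 3) (pow_pos hr 6)
    have p4 := mul_pos (pow_pos hc 4) (pow_pos hr 5)
    have p5 := mul_pos (pow_pos hc 5) (pow_pos hr 4)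
    have p6 := mul_pos hc (pow_pos hr 2)
    have p7 := mul_pos (pow_pos hc 2) hr
    have p8 := pow_pos hc 3
    have p9 := pow_pos hr 9
    have p10 := pow_pos hr 3
    nlinarith [p1,p2,p3,p4,p5,p6,p7,p8,p9,p10]
  constructor
  · intro r hr hrc
    have h1 : 0 < (c - r) ^ 3 := pow_pos (by linarith) 3
    have h2 := mul_pos h1 (Mpos r hr)
    rw [← key r hr] at h2
    have h3 : 0 < t r - h r := by
      have h4 : (0:ℝ) < 121 * r ^ 12 := by positivity
      nlinarith
    linarith
  · intro r hrc
    have hr : 0 < r := lt_trans hc hrc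
    have h1 : (c - r) ^ 3 < 0 := by
      apply Odd.pow_neg ⟨1, by norm_num⟩; linarith
    have h2 := mul_neg_of_neg_of_pos h1 (Mpos r hr)
    rw [← key r hr] at h2
    have h4 : (0:ℝ) < 121 * r ^ 12 := by positivity
    nlinarith
end

section
/- Let q(r) = -(25/11) r^{12} + (360/121)(11/5)^{1/6} r^{11} - 2 r^{6} + 1. Then r₀ = (11/5)^{1/6} is a root of q of multiplicity at least 3, q(r) > 0 for 0 < r < r₀, and q(r) < 0 for r > r₀. -/
theorem stmt_5 (q : ℝ → ℝ)
    (hq : ∀ r : ℝ, q r = -(25/11) * r ^ 12 + (360/121) * (11/5 : ℝ) ^ ((1:ℝ)/6) * r ^ 11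
      - 2 * r ^ 6 + 1) :
    q ((11/5 : ℝ) ^ ((1:ℝ)/6)) = 0 ∧
    deriv q ((11/5 : ℝ) ^ ((1:ℝ)/6)) = 0 ∧
    deriv (deriv q) ((11/5 : ℝ) ^ ((1:ℝ)/6)) = 0 ∧
    (∀ r : ℝ, 0 < r → r < (11/5 : ℝ) ^ ((1:ℝ)/6) → 0 < q r) ∧
    (∀ r : ℝ, (11/5 : ℝ) ^ ((1:ℝ)/6) < r → q r < 0) := by
  set a : ℝ := (11/5 : ℝ) ^ ((1:ℝ)/6) with ha_def
  have hapos : 0 < a := Real.rpow_pos_of_pos (by norm_num) _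
  have ha6 : a ^ 6 = 11/5 := by
    rw [ha_def, ← Real.rpow_natCast ((11/5:ℝ) ^ ((1:ℝ)/6)) 6,
      ← Real.rpow_mul (by norm_num : (0:ℝ) ≤ 11/5)]
    norm_num
  have hqe : q = fun r : ℝ => -(25/11) * r ^ 12 + (360/121) * a * r ^ 11 - 2 * r ^ 6 + 1 :=
    funext hq
  -- factorization with all-positive-coefficient cofactor
  set G : ℝ → ℝ := fun r => (25/11)*r^9 + (465/121)*a*r^8 + (570/121)*a^2*r^7
      + (590/121)*a^3*r^6 + (525/121)*a^4*r^5 + (375/121)*a^5*r^4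
      + (50/11)*r^3 + (30/11)*a*r^2 + (15/11)*a^2*r + (5/11)*a^3 with hG
  have key : ∀ r : ℝ, q r = (a - r)^3 * G r := by
    intro r
    rw [hq r, hG]
    linear_combination ((-5/11 : ℝ) + (-375/121)*r^4*a^2 + (600/121)*r^5*a
      + (-140/121)*r^6) * ha6
  have hGpos : ∀ r : ℝ, 0 < r → 0 < G r := by
    intro r hr
    rw [hG]
    positivity
  -- first derivative
  have hQ1 : ∀ x : ℝ, HasDerivAt q (-(300/11)*x^11 + (3960/121)*a*x^10 - 12*x^5) x := by
    intro x
    rw [hqe]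
    have h :=
      ((((hasDerivAt_pow 12 x).const_mul (-(25/11):ℝ)).add
        ((hasDerivAt_pow 11 x).const_mul ((360/121)*a))).sub
        ((hasDerivAt_pow 6 x).const_mul (2:ℝ))).add_const (1:ℝ)
    refine h.congr_deriv ?_
    push_cast
    ring
  have hdq : deriv q = fun x : ℝ => -(300/11)*x^11 + (3960/121)*a*x^10 - 12*x^5 :=
    funext fun x => (hQ1 x).deriv
  have hQ2 : ∀ x : ℝ,
      HasDerivAt (deriv q) (-(3300/11)*x^10 + (39600/121)*a*x^9 - 60*x^4) x := by
    intro x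
    rw [hdq]
    have h :=
      (((hasDerivAt_pow 11 x).const_mul (-(300/11):ℝ)).add
        ((hasDerivAt_pow 10 x).const_mul ((3960/121)*a))).sub
        ((hasDerivAt_pow 5 x).const_mul (12:ℝ))
    refine h.congr_deriv ?_
    push_cast
    ring
  refine ⟨?_, ?_, ?_, ?_, ?_⟩
  · rw [key a]; ring
  · rw [(hQ1 a).deriv]
    linear_combination (60/11 : ℝ) * a^5 * ha6
  · rw [(hQ2 a).deriv]
    linear_combination (300/11 : ℝ) * a^4 * ha6
  · intro r hr hra
    rw [key r]
    exact mul_pos (pow_pos (by linarith) 3) (hGpos r hr)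
  · intro r hra
    rw [key r]
    have h1 : (a - r)^3 < 0 := by
      have : a - r < 0 := by linarith
      exact Odd.pow_neg ⟨1, by norm_num⟩ this
    exact mul_neg_of_neg_of_pos h1 (hGpos r (lt_trans hapos hra))
end

section
/- With θ as defined (θ(r) = (360/121)(11/5)^{1/6} r^{-1} - 25/11 for 0 < r ≤ (11/5)^{1/6}, and θ(r) = -r^{-12} + 2r^{-6} for r > (11/5)^{1/6}), and h̃(r) = 1 for 0 < r ≤ 1 and h̃(r) = -r^{-12} + 2r^{-6} for r > 1, one has h̃(r) ≤ θ(r) for all r > 0. -/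
lemma key_poly (u : ℝ) (hu : 1 ≤ u) :
    0 ≤ 25*u^12 - 110*u^6 + 360*u - 275 := by
  have h1 : 0 ≤ u - 1 := by linarith
  have hu0 : 0 ≤ u := by linarith
  have hS : 0 ≤ 275 + 465*u + 570*u^2 + 590*u^3 + 525*u^4 + 375*u^5 + 250*u^6
      + 150*u^7 + 75*u^8 + 25*u^9 := by positivity
  have hfact : 25*u^12 - 110*u^6 + 360*u - 275 =
      (u-1)^3 * (275 + 465*u + 570*u^2 + 590*u^3 + 525*u^4 + 375*u^5 + 250*u^6
      + 150*u^7 + 75*u^8 + 25*u^9) := by ring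
  rw [hfact]
  exact mul_nonneg (pow_nonneg h1 3) hS

theorem stmt_10 (θ htilde : ℝ → ℝ)
    (hθ₁ : ∀ r : ℝ, 0 < r → r ≤ (11/5 : ℝ) ^ ((1:ℝ)/6) →
      θ r = (360/121) * (11/5 : ℝ) ^ ((1:ℝ)/6) * r⁻¹ - 25/11)
    (hθ₂ : ∀ r : ℝ, (11/5 : ℝ) ^ ((1:ℝ)/6) < r → θ r = -r ^ (-12 : ℤ) + 2 * r ^ (-6 : ℤ))
    (hh₁ : ∀ r : ℝ, 0 < r → r ≤ 1 → htilde r = 1)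
    (hh₂ : ∀ r : ℝ, 1 < r → htilde r = -r ^ (-12 : ℤ) + 2 * r ^ (-6 : ℤ)) :
    ∀ r : ℝ, 0 < r → htilde r ≤ θ r := by
  intro r hr
  set c : ℝ := (11/5 : ℝ) ^ ((1:ℝ)/6) with hcdef
  have hcpos : 0 < c := Real.rpow_pos_of_pos (by norm_num) _
  have hc6 : c ^ (6:ℕ) = 11/5 := by
    rw [hcdef, ← Real.rpow_natCast ((11/5 : ℝ) ^ ((1:ℝ)/6)) 6,
      ← Real.rpow_mul (by norm_num : (0:ℝ) ≤ 11/5)]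
    norm_num
  have hc1 : (11:ℝ)/10 < c := by
    apply lt_of_pow_lt_pow_left₀ 6 (le_of_lt hcpos)
    rw [hc6]; norm_num
  rcases le_or_gt r c with hrc | hrc
  · -- r ≤ c
    rw [hθ₁ r hr hrc]
    rcases le_or_gt r 1 with hr1 | hr1
    · -- 0 < r ≤ 1 : htilde r = 1
      rw [hh₁ r hr hr1]
      have hrinv : 1 ≤ r⁻¹ := (one_le_inv₀ hr).mpr hr1
      nlinarith [mul_nonneg (le_of_lt (by linarith : (0:ℝ) < c - 11/10)) (by linarith : (0:ℝ) ≤ r⁻¹ - 1)]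
    · -- 1 < r ≤ c
      rw [hh₂ r hr1]
      set s : ℝ := r⁻¹ with hsdef
      have hspos : 0 < s := inv_pos.mpr hr
      have e12 : r ^ (-12 : ℤ) = s ^ (12:ℕ) := by
        rw [hsdef, inv_pow, ← zpow_natCast r 12, ← zpow_neg]; norm_num
      have e6 : r ^ (-6 : ℤ) = s ^ (6:ℕ) := by
        rw [hsdef, inv_pow, ← zpow_natCast r 6, ← zpow_neg]; norm_num
      rw [e12, e6]
      set u : ℝ := c * s with hudef
      have hu1 : 1 ≤ u := by
        rw [hudef, hsdef, ← div_eq_mul_inv]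
        rw [le_div_iff₀ hr]
        linarith
      have hu6 : u ^ 6 = 11/5 * s ^ 6 := by
        rw [hudef, mul_pow, hc6]
      have hs6 : s ^ 6 = 5/11 * u ^ 6 := by linarith
      have hs12 : s ^ 12 = 25/121 * u ^ 12 := by
        have : s ^ 12 = (s ^ 6) ^ 2 := by ring
        rw [this, hs6]; ring
      have hkey := key_poly u hu1
      have hgoal : (360:ℝ)/121 * c * s = 360/121 * u := by rw [hudef]; ring
      rw [hgoal, hs12, hs6]
      linarith
  · -- c < r : both sides equal
    have hr1 : 1 < r := by linarith
    rw [hθ₂ r hrc, hh₂ r hr1]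
end

section
/- The integral ∫_{0.64}^{∞} θ(r) r² dr, with θ(r) = (360/121)(11/5)^{1/6} r^{-1} - 25/11 for 0.64 < r ≤ (11/5)^{1/6} and θ(r) = -r^{-12} + 2r^{-6} for r > (11/5)^{1/6}, satisfies 24 ∫_{0.64}^{∞} θ(r) r² dr < 24.05. -/
open MeasureTheory intervalIntegral

set_option maxHeartbeats 2000000 in
theorem stmt_13 (θ : ℝ → ℝ)
    (hθ₁ : ∀ r : ℝ, 0 < r → r ≤ (11/5 : ℝ) ^ ((1:ℝ)/6) →
      θ r = (360/121) * (11/5 : ℝ) ^ ((1:ℝ)/6) * r⁻¹ - 25/11)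
    (hθ₂ : ∀ r : ℝ, (11/5 : ℝ) ^ ((1:ℝ)/6) < r → θ r = -r ^ (-12 : ℤ) + 2 * r ^ (-6 : ℤ)) :
    24 * ∫ r in Set.Ioi (0.64 : ℝ), θ r * r ^ 2 < 24.05 := by
  obtain ⟨a, ha_def⟩ : ∃ a : ℝ, a = (11/5 : ℝ) ^ ((1:ℝ)/6) := ⟨_, rfl⟩
  rw [← ha_def] at hθ₁ hθ₂
  have ha_pos : 0 < a := ha_def ▸ Real.rpow_pos_of_pos (by norm_num) _
  have ha6 : a ^ (6:ℕ) = 11/5 := by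
    rw [ha_def, ← Real.rpow_natCast ((11/5:ℝ) ^ ((1:ℝ)/6)) 6, ← Real.rpow_mul (by norm_num)]
    norm_num
  have hlo : (1.14043 : ℝ) < a := by
    by_contra h
    push_neg at h
    have h2 := pow_le_pow_left₀ ha_pos.le h 6
    rw [ha6] at h2
    norm_num at h2
  have hhi : a < 1.14044 := by
    by_contra h
    push_neg at h
    have h2 := pow_le_pow_left₀ (by norm_num : (0:ℝ) ≤ 1.14044) h 6
    rw [ha6] at h2
    norm_num at h2
  have h064a : (0.64 : ℝ) ≤ a := by linarith
  -- the two explicit integrands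
  set g1 : ℝ → ℝ := fun r => (360/121) * a * r - (25/11) * r ^ 2 with hg1
  set g2 : ℝ → ℝ := fun r => -(r ^ (-10 : ℝ)) + 2 * r ^ (-4 : ℝ) with hg2
  -- pointwise equalities
  have heq1 : Set.EqOn (fun r => θ r * r ^ 2) g1 (Set.Ioc (0.64:ℝ) a) := by
    intro r hr
    have hr0 : 0 < r := lt_trans (by norm_num) hr.1
    simp only [hg1]
    rw [hθ₁ r hr0 hr.2]
    field_simp
  have heq2 : Set.EqOn (fun r => θ r * r ^ 2) g2 (Set.Ioi a) := by
    intro r hr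
    have hr0 : 0 < r := lt_trans ha_pos hr
    simp only [hg2]
    rw [hθ₂ r hr]
    rw [show ((-10 : ℝ) : ℝ) = ((-10 : ℤ) : ℝ) by norm_num, Real.rpow_intCast,
      show ((-4 : ℝ) : ℝ) = ((-4 : ℤ) : ℝ) by norm_num, Real.rpow_intCast]
    have h12 : r ^ (-10 : ℤ) = r ^ (-12 : ℤ) * r ^ 2 := by
      rw [show (-10 : ℤ) = -12 + 2 by norm_num, zpow_add₀ hr0.ne']
      norm_num
    have h6 : r ^ (-4 : ℤ) = r ^ (-6 : ℤ) * r ^ 2 := by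
      rw [show (-4 : ℤ) = -6 + 2 by norm_num, zpow_add₀ hr0.ne']
      norm_num
    rw [h12, h6]
    ring
  -- integrability
  have hint1 : IntegrableOn (fun r => θ r * r ^ 2) (Set.Ioc (0.64:ℝ) a) := by
    refine (IntegrableOn.congr_fun ?_ heq1.symm measurableSet_Ioc)
    exact (Continuous.integrableOn_Ioc (by continuity))
  have hig2a : IntegrableOn (fun r : ℝ => r ^ (-10 : ℝ)) (Set.Ioi a) :=
    integrableOn_Ioi_rpow_of_lt (by norm_num) ha_pos
  have hig2b : IntegrableOn (fun r : ℝ => r ^ (-4 : ℝ)) (Set.Ioi a) :=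
    integrableOn_Ioi_rpow_of_lt (by norm_num) ha_pos
  have hig2 : IntegrableOn g2 (Set.Ioi a) := by
    exact hig2a.neg.add (hig2b.const_mul 2)
  have hint2 : IntegrableOn (fun r => θ r * r ^ 2) (Set.Ioi a) :=
    IntegrableOn.congr_fun hig2 heq2.symm measurableSet_Ioi
  -- value of first integral
  have hI1 : ∫ r in Set.Ioc (0.64:ℝ) a, θ r * r ^ 2
      = (360/121) * a * ((a^2 - 0.64^2)/2) - (25/11) * ((a^3 - 0.64^3)/3) := by
    rw [setIntegral_congr_fun measurableSet_Ioc heq1,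
      ← intervalIntegral.integral_of_le h064a]
    have hi1 : IntervalIntegrable (fun r : ℝ => (360/121) * a * r) volume 0.64 a :=
      Continuous.intervalIntegrable (by continuity) _ _
    have hi2 : IntervalIntegrable (fun r : ℝ => (25/11) * r ^ 2) volume 0.64 a :=
      Continuous.intervalIntegrable (by continuity) _ _
    rw [hg1]
    rw [intervalIntegral.integral_sub hi1 hi2, intervalIntegral.integral_const_mul,
      intervalIntegral.integral_const_mul, integral_id, integral_pow]
    norm_num
  -- value of second integral
  have hI2 : ∫ r in Set.Ioi a, θ r * r ^ 2
      = -(a ^ (-9 : ℝ) / 9) + 2 * (a ^ (-3 : ℝ) / 3) := by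
    rw [setIntegral_congr_fun measurableSet_Ioi heq2, hg2]
    have hsplit2 : (∫ r in Set.Ioi a, (-(r ^ (-10 : ℝ)) + 2 * r ^ (-4 : ℝ)))
        = (∫ r in Set.Ioi a, -(r ^ (-10 : ℝ))) + ∫ r in Set.Ioi a, 2 * r ^ (-4 : ℝ) :=
      integral_add hig2a.neg (hig2b.const_mul 2)
    rw [hsplit2, MeasureTheory.integral_neg, MeasureTheory.integral_const_mul,
      integral_Ioi_rpow_of_lt (by norm_num) ha_pos,
      integral_Ioi_rpow_of_lt (by norm_num) ha_pos]
    norm_num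
  -- combine
  have hsplit : Set.Ioc (0.64:ℝ) a ∪ Set.Ioi a = Set.Ioi (0.64:ℝ) :=
    Set.Ioc_union_Ioi_eq_Ioi h064a
  have hdisj : Disjoint (Set.Ioc (0.64:ℝ) a) (Set.Ioi a) := by
    apply Set.disjoint_left.2
    intro x hx hx'
    exact absurd hx.2 (not_le.2 hx')
  have key : ∫ r in Set.Ioi (0.64:ℝ), θ r * r ^ 2
      = ((360/121) * a * ((a^2 - 0.64^2)/2) - (25/11) * ((a^3 - 0.64^3)/3))
        + (-(a ^ (-9 : ℝ) / 9) + 2 * (a ^ (-3 : ℝ) / 3)) := by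
    rw [← hsplit, setIntegral_union hdisj measurableSet_Ioi hint1 hint2, hI1, hI2]
  rw [key]
  -- express rpow terms via a ^ 3
  have ht_pos : (0:ℝ) < a ^ 3 := by positivity
  have h9 : a ^ (-9 : ℝ) = ((11/5) * a ^ 3)⁻¹ := by
    rw [show (-9 : ℝ) = ((-9 : ℤ) : ℝ) by norm_num, Real.rpow_intCast,
      zpow_neg, show ((9:ℤ) = (9:ℕ)) by norm_num, zpow_natCast]
    congr 1
    rw [← ha6]
    ring
  have h3 : a ^ (-3 : ℝ) = (a ^ 3)⁻¹ := by
    rw [show (-3 : ℝ) = ((-3 : ℤ) : ℝ) by norm_num, Real.rpow_intCast,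
      zpow_neg, show ((3:ℤ) = (3:ℕ)) by norm_num, zpow_natCast]
  rw [h9, h3]
  -- numeric estimate
  have htlo : (1.4832 : ℝ) < a ^ 3 := by
    have h : (1.14043:ℝ)^3 < a^3 := pow_lt_pow_left₀ hlo (by norm_num) (by norm_num)
    norm_num at h
    linarith
  have hthi : a ^ 3 < 1.48327 := by
    have h : a^3 < (1.14044:ℝ)^3 := pow_lt_pow_left₀ hhi ha_pos.le (by norm_num)
    norm_num at h
    linarith
  have hinv : a ^ 3 * (a ^ 3)⁻¹ = 1 := mul_inv_cancel₀ ht_pos.ne'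
  have hipos : (0:ℝ) < (a ^ 3)⁻¹ := inv_pos.2 ht_pos
  have hinv_lo : (0.674 : ℝ) < (a ^ 3)⁻¹ := by
    nlinarith [mul_pos hipos (by linarith : (0:ℝ) < 1.48327 - a ^ 3)]
  have hinv_hi : (a ^ 3)⁻¹ < 0.6743 := by
    nlinarith [mul_pos hipos (by linarith : (0:ℝ) < a ^ 3 - 1.4832)]
  have hmix : ((11/5) * a ^ 3)⁻¹ = (5/11) * (a ^ 3)⁻¹ := by
    rw [mul_inv]
    norm_num
  rw [hmix]
  have hrw : (360/121) * a * ((a^2 - 0.64^2)/2)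
      = (180/121) * a ^ 3 - (180/121) * 0.64^2 * a := by ring
  rw [hrw]
  norm_num
  linarith
end

section
/- Let h(d) = -d^{-12} + 2d^{-6}. Then for all 0 < d ≤ 0.98, (113/2) (1/0.98³) (0.98 - d)² (d + 1.96) + 2(h(d) - 1) < 0. -/
lemma key (d : ℝ) (hd : 0 < d) :
    (47/5) * (0.98 - d) * d^6 < 1 - d^6 := by
  nlinarith [sq_nonneg (d - 0.94), sq_nonneg (d^2 - 0.88), sq_nonneg (d^3 - 0.83), sq_nonneg d, pow_pos hd 3, pow_pos hd 6, sq_nonneg (d^3 - 0.94*d^2), sq_nonneg (d^3*(d-0.94))]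

theorem stmt_17 (h : ℝ → ℝ)
    (hh : ∀ d : ℝ, 0 < d → h d = -d ^ (-12 : ℤ) + 2 * d ^ (-6 : ℤ)) :
    ∀ d : ℝ, 0 < d → d ≤ 0.98 →
      (113 / 2) * (1 / (0.98 : ℝ) ^ 3) * (0.98 - d) ^ 2 * (d + 1.96) + 2 * (h d - 1) < 0 := by
  intro d hd hle
  rw [hh d hd]
  have hd6 : (0:ℝ) < d^6 := by positivity
  have e1 : d ^ (-12:ℤ) = (1/d^6)^2 := by
    rw [zpow_neg]
    rw [show ((12:ℤ)) = ((12:ℕ):ℤ) by norm_num, zpow_natCast]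
    field_simp
  have e2 : d ^ (-6:ℤ) = 1/d^6 := by
    rw [zpow_neg]
    rw [show ((6:ℤ)) = ((6:ℕ):ℤ) by norm_num, zpow_natCast, one_div]
  rw [e1, e2]
  obtain ⟨y, hy⟩ : ∃ y : ℝ, y = 1/d^6 - 1 := ⟨_, rfl⟩
  have hkey : (47/5) * (0.98 - d) < y := by
    have := key d hd
    rw [hy]
    rw [div_sub_one (ne_of_gt hd6), lt_div_iff₀ hd6]
    linarith
  have ht : (0:ℝ) ≤ 0.98 - d := by linarith
  have hy0 : 0 ≤ y := by nlinarith [hkey, ht, mul_nonneg ht ht]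
  have hexp : -(1/d^6)^2 + 2 * (1/d^6) - 1 = -y^2 := by rw [hy]; ring
  have : (113 / 2) * (1 / (0.98 : ℝ) ^ 3) * (0.98 - d) ^ 2 * (d + 1.96) + 2 * (-(1/d^6)^2 + 2*(1/d^6) - 1) < 0 := by
    rw [show 2 * (-(1/d^6)^2 + 2*(1/d^6) - 1) = 2 * (-y^2) by rw [← hexp]]
    nlinarith [sq_nonneg (0.98 - d), mul_le_mul_of_nonneg_left hle ht]
  linarith [this]
end

section
/- Let P(d) = c₁ d^{15} + c₂ d^{13} + 111 d^{12} + 4 d⁶ - 2 with c₁ = 113/(2·0.98³) and c₂ = -8475/49. Then P(d) < 0 for all 0 < d ≤ 0.98. -/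
set_option maxHeartbeats 1600000

lemma chord_aux (n : ℕ) (a b d : ℝ) (ha : 0 ≤ a) (h1 : a ≤ d) (h2 : d ≤ b) (hab : a < b) :
    (b - a) * d ^ n ≤ (b - d) * a ^ n + (d - a) * b ^ n := by
  have hba : 0 < b - a := by linarith
  have := (convexOn_pow n).2 (Set.mem_Ici.2 ha) (Set.mem_Ici.2 (by linarith : (0:ℝ) ≤ b))
    (show (0:ℝ) ≤ (b - d)/(b - a) from div_nonneg (by linarith) hba.le)
    (show (0:ℝ) ≤ (d - a)/(b - a) from div_nonneg (by linarith) hba.le)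
    (by field_simp; ring)
  simp only [smul_eq_mul] at this
  have hd : (b - d) / (b - a) * a + (d - a) / (b - a) * b = d := by field_simp; ring
  rw [hd] at this
  calc (b - a) * d ^ n ≤ (b - a) * ((b - d) / (b - a) * a ^ n + (d - a) / (b - a) * b ^ n) := by
        nlinarith
    _ = (b - d) * a ^ n + (d - a) * b ^ n := by field_simp

lemma seg_aux (a b d : ℝ) (ha : (0.65:ℝ) ≤ a) (h1 : a ≤ d) (h2 : d ≤ b) (hab : a < b)
    (hb : b ≤ (0.98:ℝ))
    (hfin : ∀ e : ℝ, a ≤ e → e ≤ b →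
      (b - a) * (113 / (2 * (0.98:ℝ) ^ 3)) * ((b - e) * a ^ 12 + (e - a) * b ^ 12)
        * (0.98 - e) ^ 2 * (e + 1.96)
      < 2 * ((b - a) - ((b - e) * a ^ 6 + (e - a) * b ^ 6)) ^ 2) :
    113 / (2 * (0.98:ℝ) ^ 3) * d ^ 12 * (0.98 - d) ^ 2 * (d + 1.96) < 2 * (d ^ 6 - 1) ^ 2 := by
  have hba : 0 < b - a := by linarith
  have h12 := chord_aux 12 a b d (by linarith) h1 h2 hab
  have h6 := chord_aux 6 a b d (by linarith) h1 h2 hab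
  have hc : (0:ℝ) ≤ (0.98 - d) ^ 2 * (d + 1.96) :=
    mul_nonneg (sq_nonneg _) (by linarith)
  have hb6 : b ^ 6 < 1 := by
    calc b ^ 6 ≤ (0.98:ℝ) ^ 6 := pow_le_pow_left₀ (by linarith) hb 6
      _ < 1 := by norm_num
  have ha6 : a ^ 6 < 1 := by
    calc a ^ 6 ≤ b ^ 6 := pow_le_pow_left₀ (by linarith) hab.le 6
      _ < 1 := hb6
  have hd6 : d ^ 6 < 1 := by
    calc d ^ 6 ≤ b ^ 6 := pow_le_pow_left₀ (by linarith) h2 6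
      _ < 1 := hb6
  have key := hfin d h1 h2
  have hc1 : (0:ℝ) < 113 / (2 * (0.98:ℝ) ^ 3) := by norm_num
  have hstep1 := mul_nonneg (mul_nonneg hba.le hc1.le)
    (mul_nonneg (by linarith : (0:ℝ) ≤ (b - d) * a ^ 12 + (d - a) * b ^ 12
        - (b - a) * d ^ 12) hc)
  have hL6nn : (0:ℝ) ≤ (b - a) - ((b - d) * a ^ 6 + (d - a) * b ^ 6) := by
    have u1 := mul_nonneg (by linarith : (0:ℝ) ≤ b - d) (by linarith : (0:ℝ) ≤ 1 - a ^ 6)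
    have u2 := mul_nonneg (by linarith : (0:ℝ) ≤ d - a) (by linarith : (0:ℝ) ≤ 1 - b ^ 6)
    nlinarith
  have hstep2 := mul_nonneg (by linarith : (0:ℝ) ≤ ((b - d) * a ^ 6 + (d - a) * b ^ 6)
        - (b - a) * d ^ 6)
    (by nlinarith [mul_nonneg hba.le (by linarith : (0:ℝ) ≤ 1 - d ^ 6)] :
      (0:ℝ) ≤ 2 * (b - a) - (b - a) * d ^ 6 - ((b - d) * a ^ 6 + (d - a) * b ^ 6))
  have hfinal : (b - a) ^ 2 * (113 / (2 * (0.98:ℝ) ^ 3) * d ^ 12 * (0.98 - d) ^ 2 * (d + 1.96))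
      < (b - a) ^ 2 * (2 * (d ^ 6 - 1) ^ 2) := by nlinarith [hstep1, hstep2, key]
  exact lt_of_mul_lt_mul_left hfinal (by positivity)

theorem stmt_18 (c₁ c₂ : ℝ) (hc₁ : c₁ = 113 / (2 * (0.98 : ℝ) ^ 3)) (hc₂ : c₂ = -8475 / 49)
    (P : ℝ → ℝ)
    (hP : ∀ d : ℝ, P d = c₁ * d ^ 15 + c₂ * d ^ 13 + 111 * d ^ 12 + 4 * d ^ 6 - 2) :
    ∀ d : ℝ, 0 < d → d ≤ 0.98 → P d < 0 := by
  intro d hd hle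
  rw [hP d, hc₁, hc₂]
  have key : 113 / (2 * (0.98:ℝ) ^ 3) * d ^ 15 + (-8475 / 49) * d ^ 13 + 111 * d ^ 12
      + 4 * d ^ 6 - 2
      = 113 / (2 * (0.98:ℝ) ^ 3) * d ^ 12 * (0.98 - d) ^ 2 * (d + 1.96)
        - 2 * (d ^ 6 - 1) ^ 2 := by
    norm_num; ring
  rw [key]
  rw [sub_neg]
  rcases le_or_gt d 0.65 with hcase | hcase
  · -- small d
    have h12 : d ^ 12 ≤ (0.65:ℝ) ^ 12 := pow_le_pow_left₀ hd.le hcase 12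
    have h6 : d ^ 6 ≤ (0.65:ℝ) ^ 6 := pow_le_pow_left₀ hd.le hcase 6
    have hc : (0:ℝ) ≤ (0.98 - d) ^ 2 * (d + 1.96) := by positivity
    nlinarith [mul_nonneg (sub_nonneg.2 h12) hc,
      mul_nonneg (sub_nonneg.2 h6) (by nlinarith : (0:ℝ) ≤ 2 - d ^ 6 - (0.65:ℝ) ^ 6),
      mul_nonneg hd.le (sub_nonneg.2 hcase),
      mul_nonneg (mul_nonneg hd.le (sub_nonneg.2 hcase)) hd.le,
      mul_nonneg (mul_nonneg hd.le (sub_nonneg.2 hcase)) (sub_nonneg.2 hcase),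
      pow_nonneg hd.le 6, pow_nonneg hd.le 12]
  · have seg : ∀ a b : ℝ, (0.65:ℝ) ≤ a → a < b → b ≤ 0.98 → a ≤ d → d ≤ b →
        (∀ e : ℝ, a ≤ e → e ≤ b →
          (b - a) * (113 / (2 * (0.98:ℝ) ^ 3)) * ((b - e) * a ^ 12 + (e - a) * b ^ 12)
            * (0.98 - e) ^ 2 * (e + 1.96)
          < 2 * ((b - a) - ((b - e) * a ^ 6 + (e - a) * b ^ 6)) ^ 2) →
        113 / (2 * (0.98:ℝ) ^ 3) * d ^ 12 * (0.98 - d) ^ 2 * (d + 1.96)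
          < 2 * (d ^ 6 - 1) ^ 2 := by
      intro a b ha hab hb h1 h2 hfin
      exact seg_aux a b d ha h1 h2 hab hb hfin
    rcases le_or_gt d 0.73 with hc2 | hc2
    · refine seg 0.65 0.73 (by norm_num) (by norm_num) (by norm_num) hcase.le hc2 ?_
      intro e he1 he2
      nlinarith [mul_nonneg (sub_nonneg.2 he1) (sub_nonneg.2 he2),
        mul_nonneg (mul_nonneg (sub_nonneg.2 he1) (sub_nonneg.2 he2)) (sub_nonneg.2 he1),
        mul_nonneg (mul_nonneg (sub_nonneg.2 he1) (sub_nonneg.2 he2)) (sub_nonneg.2 he2),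
        sq_nonneg ((e - 0.65) * (0.73 - e))]
    · rcases le_or_gt d 0.81 with hc3 | hc3
      · refine seg 0.73 0.81 (by norm_num) (by norm_num) (by norm_num) hc2.le hc3 ?_
        intro e he1 he2
        nlinarith [mul_nonneg (sub_nonneg.2 he1) (sub_nonneg.2 he2),
          mul_nonneg (mul_nonneg (sub_nonneg.2 he1) (sub_nonneg.2 he2)) (sub_nonneg.2 he1),
          mul_nonneg (mul_nonneg (sub_nonneg.2 he1) (sub_nonneg.2 he2)) (sub_nonneg.2 he2),
          sq_nonneg ((e - 0.73) * (0.81 - e))]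
      · rcases le_or_gt d 0.89 with hc4 | hc4
        · refine seg 0.81 0.89 (by norm_num) (by norm_num) (by norm_num) hc3.le hc4 ?_
          intro e he1 he2
          nlinarith [mul_nonneg (sub_nonneg.2 he1) (sub_nonneg.2 he2),
            mul_nonneg (mul_nonneg (sub_nonneg.2 he1) (sub_nonneg.2 he2)) (sub_nonneg.2 he1),
            mul_nonneg (mul_nonneg (sub_nonneg.2 he1) (sub_nonneg.2 he2)) (sub_nonneg.2 he2),
            sq_nonneg ((e - 0.81) * (0.89 - e))]
        · rcases le_or_gt d 0.97 with hc5 | hc5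
          · refine seg 0.89 0.97 (by norm_num) (by norm_num) (by norm_num) hc4.le hc5 ?_
            intro e he1 he2
            nlinarith [mul_nonneg (sub_nonneg.2 he1) (sub_nonneg.2 he2),
              mul_nonneg (mul_nonneg (sub_nonneg.2 he1) (sub_nonneg.2 he2)) (sub_nonneg.2 he1),
              mul_nonneg (mul_nonneg (sub_nonneg.2 he1) (sub_nonneg.2 he2)) (sub_nonneg.2 he2),
              sq_nonneg ((e - 0.89) * (0.97 - e)), sq_nonneg (e - 0.93),
              mul_nonneg (mul_nonneg (sub_nonneg.2 he1) (sub_nonneg.2 he2)) (sq_nonneg (e - 0.93)),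
              mul_nonneg (sub_nonneg.2 he1) (sq_nonneg (e - 0.93)),
              mul_nonneg (sub_nonneg.2 he2) (sq_nonneg (e - 0.93))]
          · refine seg 0.97 0.98 (by norm_num) (by norm_num) (by norm_num) hc5.le hle ?_
            intro e he1 he2
            nlinarith [mul_nonneg (sub_nonneg.2 he1) (sub_nonneg.2 he2),
              mul_nonneg (mul_nonneg (sub_nonneg.2 he1) (sub_nonneg.2 he2)) (sub_nonneg.2 he1),
              mul_nonneg (mul_nonneg (sub_nonneg.2 he1) (sub_nonneg.2 he2)) (sub_nonneg.2 he2),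
              sq_nonneg ((e - 0.97) * (0.98 - e))]
end
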